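/- arXiv:1901.08031 — 3 statements merged into one kernel-verified Lean document; each statement's English description precedes it below -/
import Mathlib

section
/- Let N be a positive integer, 0 < s < 1 with N > 2s, p > 1 and α ≤ -2s. Then there is no measurable function u : ℝ^N → [0,∞) which is locally bounded, not almost everywhere equal to zero, and satisfies u(x) = ∫_{ℝ^N} |y|^α u(y)^p |x-y|^{-(N-2s)} dy for almost every x ∈ ℝ^N. -/
open MeasureTheory Filter Set Metric

set_option maxHeartbeats 1000000 in
/-- **Nonexistence for `α ≤ -2s`** (Remark 2.2 i)).
For `N ≥ 1`, `0 < s < 1` with `N > 2s`, `p > 1` and `α ≤ -2s`, there is no nonnegative,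
locally bounded, not a.e. zero measurable function satisfying the integral Hénon equation
`u(x) = ∫ |y|^α u(y)^p |x-y|^{-(N-2s)} dy` for a.e. `x`. -/
theorem no_solution_integral_henon_alpha_le
    (N : ℕ) (hN : 0 < N) (s α p : ℝ) (hs0 : 0 < s) (hs1 : s < 1)
    (hNs : 2 * s < (N : ℝ)) (hp1 : 1 < p) (hα : α ≤ -2 * s) :
    ¬ ∃ u : EuclideanSpace ℝ (Fin N) → ℝ,
        Measurable u ∧
        (∀ x, 0 ≤ u x) ∧
        (∀ R : ℝ, ∃ C : ℝ, ∀ x : EuclideanSpace ℝ (Fin N), ‖x‖ ≤ R → u x ≤ C) ∧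
        ¬ (∀ᵐ x : EuclideanSpace ℝ (Fin N), u x = 0) ∧
        (∀ᵐ x : EuclideanSpace ℝ (Fin N),
          Integrable (fun y : EuclideanSpace ℝ (Fin N) =>
            ‖y‖ ^ α * u y ^ p / ‖x - y‖ ^ ((N : ℝ) - 2 * s)) ∧
          u x = ∫ y : EuclideanSpace ℝ (Fin N),
            ‖y‖ ^ α * u y ^ p / ‖x - y‖ ^ ((N : ℝ) - 2 * s)) := by
  classical
  rintro ⟨u, humeas, hupos, huloc, hune, huae⟩
  haveI : Nonempty (Fin N) := ⟨⟨0, hN⟩⟩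
  have hν : (0:ℝ) < (N:ℝ) - 2*s := by linarith
  have hα0 : α < 0 := by linarith
  have hp0 : (0:ℝ) < p := by linarith
  have hf_nonneg : ∀ x y : EuclideanSpace ℝ (Fin N),
      0 ≤ ‖y‖ ^ α * u y ^ p / ‖x - y‖ ^ ((N:ℝ) - 2*s) := fun x y =>
    div_nonneg (mul_nonneg (Real.rpow_nonneg (norm_nonneg _) _)
      (Real.rpow_nonneg (hupos y) _)) (Real.rpow_nonneg (norm_nonneg _) _)
  have hne_ae : ∀ x : EuclideanSpace ℝ (Fin N), ∀ᵐ y : EuclideanSpace ℝ (Fin N), y ≠ x := by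
    intro x
    rw [ae_iff]
    have : {y : EuclideanSpace ℝ (Fin N) | ¬ y ≠ x} = {x} := by ext y; simp
    rw [this]
    exact measure_singleton x
  -- Step 1 : find a set of positive measure where u is bounded below
  obtain ⟨n, hn⟩ : ∃ n : ℕ, volume (({y : EuclideanSpace ℝ (Fin N) | 1/((n:ℝ)+1) ≤ u y}
      ∩ closedBall (0 : EuclideanSpace ℝ (Fin N)) ((n:ℝ)+1)) \ {0}) ≠ 0 := by
    by_contra h
    push_neg at h
    apply hune
    rw [ae_iff]
    have h0 : volume ({y : EuclideanSpace ℝ (Fin N) | ¬ u y = 0} \ {0}) = 0 := by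
      refine measure_mono_null ?_ (measure_iUnion_null h)
      rintro y ⟨hy, hy0⟩
      have hy' : 0 < u y := lt_of_le_of_ne (hupos y) (Ne.symm hy)
      obtain ⟨n, hn1⟩ := exists_nat_gt (max (1 / u y) ‖y‖)
      have h1 : 1 / u y < n := lt_of_le_of_lt (le_max_left _ _) hn1
      have h2 : ‖y‖ < n := lt_of_le_of_lt (le_max_right _ _) hn1
      refine mem_iUnion.2 ⟨n, ⟨⟨?_, ?_⟩, hy0⟩⟩
      · have h3 : 1 < (n:ℝ) * u y := by
          rw [div_lt_iff₀ hy'] at h1; linarith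
        show 1/((n:ℝ)+1) ≤ u y
        rw [div_le_iff₀ (by positivity)]
        nlinarith
      · simp only [mem_closedBall_zero_iff]
        linarith
    have hsub : {y : EuclideanSpace ℝ (Fin N) | ¬ u y = 0} ⊆
        ({y : EuclideanSpace ℝ (Fin N) | ¬ u y = 0} \ {0}) ∪ {0} := by
      intro y hy
      by_cases h0' : y = (0 : EuclideanSpace ℝ (Fin N))
      · exact Or.inr h0'
      · exact Or.inl ⟨hy, h0'⟩
    exact measure_mono_null hsub (measure_union_null h0 (measure_singleton _))
  -- notation for the set A, δ, R
  set δ : ℝ := 1/((n:ℝ)+1) with hδdef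
  set R : ℝ := (n:ℝ)+1 with hRdef
  set A : Set (EuclideanSpace ℝ (Fin N)) :=
    ({y : EuclideanSpace ℝ (Fin N) | δ ≤ u y} ∩ closedBall 0 R) \ {0} with hAdef
  have hδ : 0 < δ := by positivity
  have hR : 0 < R := by positivity
  have hAmeas : MeasurableSet A :=
    ((measurableSet_le measurable_const humeas).inter measurableSet_closedBall).diff
      (measurableSet_singleton _)
  have hAfin : volume A ≠ ⊤ := by
    refine ne_of_lt (lt_of_le_of_lt (measure_mono ?_) (measure_closedBall_lt_top (x := (0:EuclideanSpace ℝ (Fin N))) (r := R)))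
    intro y hy
    exact hy.1.2
  -- Step 2 : u ≥ c0 > 0 a.e. on the unit ball
  set c0 : ℝ := (volume A).toReal * (R^α * δ^p / (1+R)^((N:ℝ)-2*s)) with hc0def
  have hvolA : 0 < (volume A).toReal := ENNReal.toReal_pos hn hAfin
  have hc0 : 0 < c0 := by
    apply mul_pos hvolA
    apply div_pos (mul_pos (Real.rpow_pos_of_pos hR _) (Real.rpow_pos_of_pos hδ _))
      (Real.rpow_pos_of_pos (by linarith) _)
  have h2 : ∀ᵐ x : EuclideanSpace ℝ (Fin N), ‖x‖ ≤ 1 → c0 ≤ u x := by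
    filter_upwards [huae] with x hx hx1
    obtain ⟨hint, heq⟩ := hx
    rw [heq]
    have hb : (volume A).toReal • (R^α * δ^p / (1+R)^((N:ℝ)-2*s)) ≤
        ∫ y in A, ‖y‖ ^ α * u y ^ p / ‖x - y‖ ^ ((N:ℝ) - 2*s) := by
      rw [← measureReal_def, ← setIntegral_const]
      refine integral_mono_ae (integrableOn_const hAfin)
        hint.integrableOn ?_
      filter_upwards [ae_restrict_mem hAmeas, ae_restrict_of_ae (hne_ae x)] with y hy hyx
      obtain ⟨⟨hyu, hyR⟩, hy0⟩ := hy
      have hy0' : 0 < ‖y‖ := norm_pos_iff.2 hy0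
      have hyR' : ‖y‖ ≤ R := mem_closedBall_zero_iff.1 hyR
      have hxy0 : 0 < ‖x - y‖ := by
        rw [norm_sub_pos_iff]; exact fun h => hyx h.symm
      have hxyR : ‖x - y‖ ≤ 1 + R :=
        le_trans (norm_sub_le _ _) (by linarith)
      refine div_le_div₀ (mul_nonneg (Real.rpow_nonneg (norm_nonneg _) _)
          (Real.rpow_nonneg (hupos y) _)) ?_ (Real.rpow_pos_of_pos hxy0 _) ?_
      · exact mul_le_mul (Real.rpow_le_rpow_of_nonpos hy0' hyR' hα0.le)
          (Real.rpow_le_rpow hδ.le hyu hp0.le) (Real.rpow_nonneg hδ.le _)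
          (Real.rpow_nonneg (norm_nonneg _) _)
      · exact Real.rpow_le_rpow (norm_nonneg _) hxyR hν.le
    calc c0 = (volume A).toReal • (R^α * δ^p / (1+R)^((N:ℝ)-2*s)) := by
            rw [smul_eq_mul]
      _ ≤ ∫ y in A, ‖y‖ ^ α * u y ^ p / ‖x - y‖ ^ ((N:ℝ) - 2*s) := hb
      _ ≤ ∫ y, ‖y‖ ^ α * u y ^ p / ‖x - y‖ ^ ((N:ℝ) - 2*s) :=
            setIntegral_le_integral hint (Eventually.of_forall (hf_nonneg x))
  -- Step 3 : dyadic annuli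
  set t : ℕ → ℝ := fun k => (2:ℝ)⁻¹ ^ k with htdef
  have ht_pos : ∀ k, 0 < t k := fun k => pow_pos (by norm_num) _
  have ht_le_one : ∀ k, t k ≤ 1 := fun k => pow_le_one₀ (by norm_num) (by norm_num)
  have ht_anti : ∀ {j k : ℕ}, j ≤ k → t k ≤ t j := fun h =>
    pow_le_pow_of_le_one (by norm_num) (by norm_num) h
  have ht_succ : ∀ k, t (k+1) = t k * 2⁻¹ := fun k => pow_succ _ _
  set Ann : ℕ → Set (EuclideanSpace ℝ (Fin N)) := fun k =>
    closedBall 0 (t k) \ closedBall 0 (t (k+1)) with hAnndef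
  have hAnnmeas : ∀ k, MeasurableSet (Ann k) :=
    fun k => measurableSet_closedBall.diff measurableSet_closedBall
  have hAnnfin : ∀ k, volume (Ann k) < ⊤ := fun k =>
    lt_of_le_of_lt (measure_mono diff_subset) measure_closedBall_lt_top
  set V : ℝ := (volume (ball (0:EuclideanSpace ℝ (Fin N)) 1)).toReal with hVdef
  have hV : 0 < V :=
    ENNReal.toReal_pos (measure_ball_pos volume _ one_pos).ne' measure_ball_lt_top.ne
  have hdim : Module.finrank ℝ (EuclideanSpace ℝ (Fin N)) = N := finrank_euclideanSpace_fin
  have hAnnvol : ∀ k, (volume (Ann k)).toReal = (t k ^ N - t (k+1) ^ N) * V := by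
    intro k
    have hsub : closedBall (0:EuclideanSpace ℝ (Fin N)) (t (k+1)) ⊆ closedBall 0 (t k) :=
      closedBall_subset_closedBall (ht_anti (Nat.le_succ k))
    rw [hAnndef]
    rw [measure_diff hsub measurableSet_closedBall.nullMeasurableSet
      measure_closedBall_lt_top.ne]
    rw [Measure.addHaar_closedBall _ _ (ht_pos k).le,
      Measure.addHaar_closedBall _ _ (ht_pos (k+1)).le, hdim]
    rw [ENNReal.toReal_sub_of_le
      (mul_le_mul_left (ENNReal.ofReal_le_ofReal
        (pow_le_pow_left₀ (ht_pos (k+1)).le (ht_anti (Nat.le_succ k)) N)) _)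
      (ENNReal.mul_ne_top ENNReal.ofReal_ne_top measure_ball_lt_top.ne)]
    rw [ENNReal.toReal_mul, ENNReal.toReal_mul, ENNReal.toReal_ofReal (by positivity),
      ENNReal.toReal_ofReal (by positivity)]
    ring
  set K : ℝ := c0 ^ p * ((1 - (2:ℝ)⁻¹ ^ N) * V) / (2:ℝ)^((N:ℝ)-2*s) with hKdef
  have h2N : (2:ℝ)⁻¹ ^ N < 1 := pow_lt_one₀ (by norm_num) (by norm_num) hN.ne'
  have hK : 0 < K := by
    apply div_pos
    · exact mul_pos (Real.rpow_pos_of_pos hc0 _) (mul_pos (by linarith) hV)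
    · exact Real.rpow_pos_of_pos (by norm_num) _
  -- choose a point x close to the origin where everything holds
  obtain ⟨C, hC⟩ := huloc 1
  obtain ⟨m, hm⟩ := exists_nat_gt (C / K)
  have hmK : C < m * K := by
    rw [div_lt_iff₀ hK] at hm; linarith
  obtain ⟨x, hxball, hint, heq⟩ : ∃ x : EuclideanSpace ℝ (Fin N),
      x ∈ closedBall (0:EuclideanSpace ℝ (Fin N)) (t (m+1)) ∧
      Integrable (fun y : EuclideanSpace ℝ (Fin N) =>
        ‖y‖ ^ α * u y ^ p / ‖x - y‖ ^ ((N : ℝ) - 2 * s)) ∧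
      u x = ∫ y : EuclideanSpace ℝ (Fin N),
        ‖y‖ ^ α * u y ^ p / ‖x - y‖ ^ ((N : ℝ) - 2 * s) := by
    by_contra hcon
    push_neg at hcon
    have hposm : volume (closedBall (0:EuclideanSpace ℝ (Fin N)) (t (m+1))) ≠ 0 :=
      (measure_closedBall_pos volume _ (ht_pos (m+1))).ne'
    apply hposm
    refine measure_mono_null ?_ (ae_iff.1 huae)
    intro x hx
    intro hPx
    exact hcon x hx hPx.1 hPx.2
  have hxnorm : ‖x‖ ≤ t (m+1) := mem_closedBall_zero_iff.1 hxball
  -- per-annulus lower bound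
  have hann : ∀ k, k < m → K ≤ ∫ y in Ann k,
      ‖y‖ ^ α * u y ^ p / ‖x - y‖ ^ ((N:ℝ) - 2*s) := by
    intro k hk
    have hT := ht_pos k
    have hT1 := ht_le_one k
    set T : ℝ := t k with hTdef
    set β : ℝ := T ^ α * c0 ^ p / (2 * T)^((N:ℝ)-2*s) with hβdef
    have hb : (volume (Ann k)).toReal • β ≤ ∫ y in Ann k,
        ‖y‖ ^ α * u y ^ p / ‖x - y‖ ^ ((N:ℝ) - 2*s) := by
      rw [← measureReal_def, ← setIntegral_const]
      refine integral_mono_ae (integrableOn_const (hAnnfin k).ne)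
        hint.integrableOn ?_
      filter_upwards [ae_restrict_mem (hAnnmeas k), ae_restrict_of_ae (hne_ae x),
        ae_restrict_of_ae h2] with y hy hyx h2y
      obtain ⟨hyT, hyT'⟩ := hy
      have hyT2 : t (k+1) < ‖y‖ := by
        by_contra hcon2
        push_neg at hcon2
        exact hyT' (mem_closedBall_zero_iff.2 hcon2)
      have hy0 : 0 < ‖y‖ := lt_trans (ht_pos (k+1)) hyT2
      have hyle : ‖y‖ ≤ T := mem_closedBall_zero_iff.1 hyT
      have hucy : c0 ≤ u y := h2y (le_trans hyle hT1)
      have hxy0 : 0 < ‖x - y‖ := by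
        rw [norm_sub_pos_iff]; exact fun h => hyx h.symm
      have hxyle : ‖x - y‖ ≤ 2 * T := by
        refine le_trans (norm_sub_le _ _) ?_
        have h1 : ‖x‖ ≤ t (k+1) := le_trans hxnorm (ht_anti (by omega))
        have h2' : t (k+1) = T * 2⁻¹ := ht_succ k
        linarith [hyle]
      refine div_le_div₀ (mul_nonneg (Real.rpow_nonneg (norm_nonneg _) _)
          (Real.rpow_nonneg (hupos y) _)) ?_ (Real.rpow_pos_of_pos hxy0 _) ?_
      · exact mul_le_mul (Real.rpow_le_rpow_of_nonpos hy0 hyle hα0.le)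
          (Real.rpow_le_rpow hc0.le hucy hp0.le) (Real.rpow_nonneg hc0.le _)
          (Real.rpow_nonneg (norm_nonneg _) _)
      · exact Real.rpow_le_rpow (norm_nonneg _) hxyle hν.le
    refine le_trans ?_ hb
    rw [hAnnvol k, smul_eq_mul]
    -- algebra : (T^N - (T/2)^N) * V * β = K * T^(α+2s) ≥ K
    have hTsucc : t (k+1) = T * 2⁻¹ := ht_succ k
    have hexp : T ^ (N:ℝ) * T ^ α / T ^ ((N:ℝ)-2*s) = T ^ (α + 2*s) := by
      rw [← Real.rpow_add hT, ← Real.rpow_sub hT]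
      ring_nf
    have hmulrpow : (2 * T) ^ ((N:ℝ)-2*s) = 2 ^ ((N:ℝ)-2*s) * T ^ ((N:ℝ)-2*s) :=
      Real.mul_rpow (by norm_num) hT.le
    have hTN : T ^ N = T ^ ((N:ℝ)) := (Real.rpow_natCast T N).symm
    have hone : 1 ≤ T ^ (α + 2*s) :=
      Real.one_le_rpow_of_pos_of_le_one_of_nonpos hT hT1 (by linarith)
    have heqK : (T ^ N - t (k+1) ^ N) * V * β = K * T ^ (α + 2*s) := by
      rw [hTsucc, mul_pow, hβdef, hmulrpow, hKdef]
      rw [← hexp, hTN]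
      have h2ν : (2:ℝ) ^ ((N:ℝ)-2*s) ≠ 0 := (Real.rpow_pos_of_pos (by norm_num) _).ne'
      have hTν : T ^ ((N:ℝ)-2*s) ≠ 0 := (Real.rpow_pos_of_pos hT _).ne'
      field_simp
    rw [heqK]
    nlinarith [hK, hone]
  -- sum over annuli
  have hdisj' : ∀ j k : ℕ, j < k → Disjoint (Ann j) (Ann k) := by
    intro j k hjk
    refine Set.disjoint_left.2 fun y hyj hyk => hyj.2 ?_
    exact closedBall_subset_closedBall (ht_anti hjk) hyk.1
  have hdisj : Set.Pairwise ↑(Finset.range m) (Function.onFun Disjoint Ann) := by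
    intro j _ k _ hjk
    rcases lt_or_gt_of_ne hjk with h | h
    · exact hdisj' j k h
    · exact (hdisj' k j h).symm
  have hsum : (m:ℝ) * K ≤ ∫ y in ⋃ k ∈ Finset.range m, Ann k,
      ‖y‖ ^ α * u y ^ p / ‖x - y‖ ^ ((N:ℝ) - 2*s) := by
    rw [integral_biUnion_finset (Finset.range m) (fun i _ => hAnnmeas i) hdisj
      (fun i _ => hint.integrableOn)]
    calc (m:ℝ) * K = ∑ _k ∈ Finset.range m, K := by
          rw [Finset.sum_const, Finset.card_range, nsmul_eq_mul]
      _ ≤ _ := Finset.sum_le_sum fun k hk => hann k (Finset.mem_range.1 hk)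
  have hfinal : (m:ℝ) * K ≤ u x := by
    rw [heq]
    exact le_trans hsum (setIntegral_le_integral hint (Eventually.of_forall (hf_nonneg x)))
  have hxle1 : ‖x‖ ≤ 1 := le_trans hxnorm (ht_le_one (m+1))
  have := hC x hxle1
  linarith
end

section
/- Let N be a positive integer, 0 < s < 1 with N > 2s, α > -2s and p > 1. Let u : ℝ^N → [0,∞) be measurable, locally bounded, not almost everywhere equal to zero, and satisfy u(x) = ∫_{ℝ^N} |y|^α u(y)^p |x-y|^{-(N-2s)} dy for every x ∈ ℝ^N. Then there exists a constant C₀ > 0 such that u(x) ≥ C₀ |x|^{-(N-2s)} for every x with |x| ≥ 2. -/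
open MeasureTheory Filter Set

/-- **Lower bound at infinity** (first step of Proposition 3.2): a nontrivial
nonnegative locally bounded solution of the integral Hénon equation satisfies
`u(x) ≥ C₀ |x|^{-(N-2s)}` for `|x| ≥ 2`. -/
theorem integral_henon_lower_bound
    (N : ℕ) (hN : 0 < N) (s α p : ℝ) (hs0 : 0 < s) (hs1 : s < 1)
    (hNs : 2 * s < (N : ℝ)) (hα : -2 * s < α) (hp1 : 1 < p)
    (u : EuclideanSpace ℝ (Fin N) → ℝ)
    (hmeas : Measurable u)
    (hpos : ∀ x, 0 ≤ u x)
    (hlocbd : ∀ R : ℝ, ∃ C : ℝ, ∀ x : EuclideanSpace ℝ (Fin N), ‖x‖ ≤ R → u x ≤ C)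
    (hne : ¬ (∀ᵐ x : EuclideanSpace ℝ (Fin N), u x = 0))
    (hint : ∀ x : EuclideanSpace ℝ (Fin N),
      Integrable (fun y : EuclideanSpace ℝ (Fin N) =>
        ‖y‖ ^ α * u y ^ p / ‖x - y‖ ^ ((N : ℝ) - 2 * s)))
    (heq : ∀ x : EuclideanSpace ℝ (Fin N),
      u x = ∫ y : EuclideanSpace ℝ (Fin N),
        ‖y‖ ^ α * u y ^ p / ‖x - y‖ ^ ((N : ℝ) - 2 * s)) :
    ∃ C₀ : ℝ, 0 < C₀ ∧ ∀ x : EuclideanSpace ℝ (Fin N), 2 ≤ ‖x‖ →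
      C₀ * ‖x‖ ^ (-((N : ℝ) - 2 * s)) ≤ u x := by
  classical
  haveI : Nonempty (Fin N) := ⟨⟨0, hN⟩⟩
  set m : ℝ := (N : ℝ) - 2 * s with hm_def
  have hm : 0 < m := by simp only [hm_def]; linarith
  set g : EuclideanSpace ℝ (Fin N) → ℝ := fun y => ‖y‖ ^ α * u y ^ p with hg_def
  have hg_nonneg : ∀ y, 0 ≤ g y := fun y =>
    mul_nonneg (Real.rpow_nonneg (norm_nonneg _) _) (Real.rpow_nonneg (hpos y) _)
  have hg_meas : Measurable g :=
    (measurable_norm.pow measurable_const).mul (hmeas.pow measurable_const)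
  -- a.e. statement: y ≠ 0
  have hae0 : ∀ᵐ y : EuclideanSpace ℝ (Fin N), y ≠ (0 : EuclideanSpace ℝ (Fin N)) := by
    have : volume ({(0 : EuclideanSpace ℝ (Fin N))} : Set _) = 0 := measure_singleton 0
    exact compl_mem_ae_iff.2 this
  -- integrability of g on closed balls
  have hball_int : ∀ R : ℝ, 0 < R →
      IntegrableOn g (Metric.closedBall (0 : EuclideanSpace ℝ (Fin N)) R) := by
    intro R hR
    have h0 : Integrable (fun y : EuclideanSpace ℝ (Fin N) => g y / ‖y‖ ^ m) := by
      simpa [hg_def, hm_def, zero_sub, norm_neg] using hint 0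
    refine Integrable.mono' ((h0.restrict).const_mul (R ^ m))
      (hg_meas.aestronglyMeasurable.restrict) ?_
    filter_upwards [ae_restrict_of_ae hae0,
      ae_restrict_mem (measurableSet_closedBall)] with y hy0 hyB
    have hy : (0 : ℝ) < ‖y‖ := norm_pos_iff.2 hy0
    have hym : (0 : ℝ) < ‖y‖ ^ m := Real.rpow_pos_of_pos hy m
    have hyR : ‖y‖ ≤ R := by simpa [Metric.mem_closedBall, dist_zero_right] using hyB
    have h1 : g y = g y / ‖y‖ ^ m * ‖y‖ ^ m := (div_mul_cancel₀ _ hym.ne').symm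
    have h2 : ‖y‖ ^ m ≤ R ^ m := Real.rpow_le_rpow (norm_nonneg _) hyR hm.le
    calc ‖g y‖ = g y / ‖y‖ ^ m * ‖y‖ ^ m := by
            rw [Real.norm_of_nonneg (hg_nonneg y)]; exact h1
      _ ≤ g y / ‖y‖ ^ m * R ^ m :=
            mul_le_mul_of_nonneg_left h2 (div_nonneg (hg_nonneg y) hym.le)
      _ = R ^ m * (g y / ‖y‖ ^ m) := by ring
  -- find a ball where u is nonzero on a set of positive measure
  obtain ⟨n, hn⟩ : ∃ n : ℕ, 0 < volume
      ({y : EuclideanSpace ℝ (Fin N) | u y ≠ 0} ∩ Metric.closedBall 0 ((n : ℝ) + 1)) := by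
    by_contra h
    push_neg at h
    have h' : ∀ n : ℕ, volume
        ({y : EuclideanSpace ℝ (Fin N) | u y ≠ 0} ∩ Metric.closedBall 0 ((n : ℝ) + 1)) = 0 :=
      fun n => le_antisymm (h n) zero_le
    have hsub : {y : EuclideanSpace ℝ (Fin N) | u y ≠ 0} ⊆
        ⋃ n : ℕ, ({y : EuclideanSpace ℝ (Fin N) | u y ≠ 0} ∩
          Metric.closedBall 0 ((n : ℝ) + 1)) := by
      intro y hy
      obtain ⟨n, hn⟩ := exists_nat_ge ‖y‖
      exact Set.mem_iUnion.2 ⟨n, hy, by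
        simp only [Metric.mem_closedBall, dist_zero_right]; linarith⟩
    have hz : volume {y : EuclideanSpace ℝ (Fin N) | u y ≠ 0} = 0 :=
      measure_mono_null hsub (measure_iUnion_null h')
    exact hne (ae_iff.2 hz)
  set R : ℝ := (n : ℝ) + 1 with hR_def
  have hR0 : (0 : ℝ) < R := by positivity
  -- positivity of the local integral
  set I : ℝ := ∫ y in Metric.closedBall (0 : EuclideanSpace ℝ (Fin N)) R, g y with hI_def
  have hI : 0 < I := by
    rw [hI_def]
    rw [setIntegral_pos_iff_support_of_nonneg_ae
      (Filter.Eventually.of_forall fun y => hg_nonneg y) (hball_int R hR0)]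
    have hsub : ({y : EuclideanSpace ℝ (Fin N) | u y ≠ 0} ∩ Metric.closedBall 0 R) \
        {(0 : EuclideanSpace ℝ (Fin N))} ⊆
        Function.support g ∩ Metric.closedBall 0 R := by
      rintro y ⟨⟨hyu, hyB⟩, hy0⟩
      refine ⟨?_, hyB⟩
      have hy : (0 : ℝ) < ‖y‖ := norm_pos_iff.2 (by simpa using hy0)
      have hu : 0 < u y := lt_of_le_of_ne (hpos y) (Ne.symm hyu)
      exact ne_of_gt (mul_pos (Real.rpow_pos_of_pos hy α) (Real.rpow_pos_of_pos hu p))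
    calc (0 : ENNReal) < volume
          ({y : EuclideanSpace ℝ (Fin N) | u y ≠ 0} ∩ Metric.closedBall 0 R) := hn
      _ = volume (({y : EuclideanSpace ℝ (Fin N) | u y ≠ 0} ∩ Metric.closedBall 0 R) \
          {(0 : EuclideanSpace ℝ (Fin N))}) :=
            (measure_diff_null (measure_singleton 0)).symm
      _ ≤ volume (Function.support g ∩ Metric.closedBall 0 R) := measure_mono hsub
  -- the constant
  refine ⟨(1 + R / 2) ^ (-m) * I, by positivity, ?_⟩
  intro x hx
  have hx0 : (0 : ℝ) < ‖x‖ := by linarith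
  -- pointwise lower bound on the ball
  have hkey : ∀ᵐ y ∂(volume.restrict (Metric.closedBall (0 : EuclideanSpace ℝ (Fin N)) R)),
      g y * ((1 + R / 2) ^ (-m) * ‖x‖ ^ (-m)) ≤ g y / ‖x - y‖ ^ m := by
    filter_upwards [ae_restrict_of_ae
      (compl_mem_ae_iff.2 (measure_singleton x) :
        ∀ᵐ y : EuclideanSpace ℝ (Fin N), y ∈ ({x}ᶜ : Set _)),
      ae_restrict_mem (measurableSet_closedBall)] with y hyx hyB
    have hyx' : y ≠ x := hyx
    have hxy : (0 : ℝ) < ‖x - y‖ := by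
      rw [norm_pos_iff, sub_ne_zero]; exact fun h => hyx' h.symm
    have hyR : ‖y‖ ≤ R := by simpa [Metric.mem_closedBall, dist_zero_right] using hyB
    have hbound : ‖x - y‖ ≤ (1 + R / 2) * ‖x‖ := by
      have h1 : ‖x - y‖ ≤ ‖x‖ + ‖y‖ := norm_sub_le x y
      have h2 : R ≤ R / 2 * ‖x‖ := by nlinarith
      nlinarith
    have hmono : ‖x - y‖ ^ m ≤ ((1 + R / 2) * ‖x‖) ^ m :=
      Real.rpow_le_rpow (norm_nonneg _) hbound hm.le
    have hprodpos : (0 : ℝ) < ((1 + R / 2) * ‖x‖) ^ m :=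
      Real.rpow_pos_of_pos (by positivity) m
    have heq2 : g y * ((1 + R / 2) ^ (-m) * ‖x‖ ^ (-m)) = g y / ((1 + R / 2) * ‖x‖) ^ m := by
      rw [Real.mul_rpow (by positivity) (norm_nonneg x), Real.rpow_neg (by positivity),
        Real.rpow_neg (norm_nonneg x), div_eq_mul_inv (g y), mul_inv]
    rw [heq2]
    exact div_le_div_of_nonneg_left (hg_nonneg y) (Real.rpow_pos_of_pos hxy m) hmono
  -- put everything together
  have hIx : IntegrableOn (fun y : EuclideanSpace ℝ (Fin N) => g y / ‖x - y‖ ^ m)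
      (Metric.closedBall (0 : EuclideanSpace ℝ (Fin N)) R) := by
    exact (hint x).integrableOn
  have hIc : IntegrableOn
      (fun y : EuclideanSpace ℝ (Fin N) => g y * ((1 + R / 2) ^ (-m) * ‖x‖ ^ (-m)))
      (Metric.closedBall (0 : EuclideanSpace ℝ (Fin N)) R) :=
    (hball_int R hR0).mul_const _
  have step1 : (∫ y in Metric.closedBall (0 : EuclideanSpace ℝ (Fin N)) R,
      g y * ((1 + R / 2) ^ (-m) * ‖x‖ ^ (-m))) ≤
      ∫ y in Metric.closedBall (0 : EuclideanSpace ℝ (Fin N)) R, g y / ‖x - y‖ ^ m :=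
    setIntegral_mono_ae_restrict hIc hIx hkey
  have step2 : (∫ y in Metric.closedBall (0 : EuclideanSpace ℝ (Fin N)) R,
      g y / ‖x - y‖ ^ m) ≤ ∫ y : EuclideanSpace ℝ (Fin N), g y / ‖x - y‖ ^ m := by
    exact setIntegral_le_integral (hint x) (Filter.Eventually.of_forall fun y =>
      div_nonneg (hg_nonneg y) (Real.rpow_nonneg (norm_nonneg _) _))
  have hconst : (∫ y in Metric.closedBall (0 : EuclideanSpace ℝ (Fin N)) R,
      g y * ((1 + R / 2) ^ (-m) * ‖x‖ ^ (-m))) = I * ((1 + R / 2) ^ (-m) * ‖x‖ ^ (-m)) := by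
    rw [hI_def, ← integral_mul_const]
  have hux : u x = ∫ y : EuclideanSpace ℝ (Fin N), g y / ‖x - y‖ ^ m := heq x
  calc (1 + R / 2) ^ (-m) * I * ‖x‖ ^ (-m)
      = I * ((1 + R / 2) ^ (-m) * ‖x‖ ^ (-m)) := by ring
    _ = ∫ y in Metric.closedBall (0 : EuclideanSpace ℝ (Fin N)) R,
          g y * ((1 + R / 2) ^ (-m) * ‖x‖ ^ (-m)) := hconst.symm
    _ ≤ ∫ y in Metric.closedBall (0 : EuclideanSpace ℝ (Fin N)) R,
          g y / ‖x - y‖ ^ m := step1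
    _ ≤ ∫ y : EuclideanSpace ℝ (Fin N), g y / ‖x - y‖ ^ m := step2
    _ = u x := hux.symm
end

section
/- Let N be a positive integer, 0 < s < 1 with N > 2s, α > -2s and 1 < p < (N + 2α + 2s)/(N - 2s). Let u be an admissible positive solution of the Hénon equation. Then it is NOT the case that for every λ > 0 and every x with 0 < |x| < λ one has u_λ(x) ≥ u(x); that is, there exist λ > 0 and x with 0 < |x| < λ such that u_λ(x) < u(x). -/
open MeasureTheory Filter Set

/-- The principal-value fractional Laplacian: `IsFracLapAt N s u x L` means that
`lim_{ε→0⁺} ∫_{|y-x|>ε} (u(x)-u(y))/|x-y|^{N+2s} dy` exists and equals `L`. -/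
def IsFracLapAt (N : ℕ) (s : ℝ) (u : EuclideanSpace ℝ (Fin N) → ℝ)
    (x : EuclideanSpace ℝ (Fin N)) (L : ℝ) : Prop :=
  Filter.Tendsto (fun ε : ℝ =>
      ∫ y in {y : EuclideanSpace ℝ (Fin N) | ε < ‖y - x‖},
        (u x - u y) / ‖x - y‖ ^ ((N : ℝ) + 2 * s))
    (nhdsWithin 0 (Set.Ioi 0)) (nhds L)

/-- The Kelvin transform `u_λ(x) = (λ/|x|)^{N-2s} u(λ²x/|x|²)`. -/
noncomputable def kelvinTransform (N : ℕ) (s lam : ℝ)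
    (u : EuclideanSpace ℝ (Fin N) → ℝ) (x : EuclideanSpace ℝ (Fin N)) : ℝ :=
  (lam / ‖x‖) ^ ((N : ℝ) - 2 * s) * u ((lam ^ 2 / ‖x‖ ^ 2) • x)

/-- `u` is `C^{1,1}` on a neighbourhood of `x`. -/
def C11Near (N : ℕ) (u : EuclideanSpace ℝ (Fin N) → ℝ)
    (x : EuclideanSpace ℝ (Fin N)) : Prop :=
  ∃ ε > 0, ContDiffOn ℝ 1 u (Metric.ball x ε) ∧
    ∃ K : NNReal, LipschitzOnWith K (fderiv ℝ u) (Metric.ball x ε)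

/-- `u` is an admissible positive solution of the Hénon equation
`(-Δ)^s u = |x|^α u^p`: it is positive, continuous, locally bounded, lies in `L_{2s}`,
is `C^{1,1}` near every point of `ℝ^N \ {0}`, solves the equation pointwise away from
the origin and satisfies the equivalent integral equation. -/
def AdmissiblePositiveSolution (N : ℕ) (s α p : ℝ)
    (u : EuclideanSpace ℝ (Fin N) → ℝ) : Prop :=
  Continuous u ∧ (∀ x, 0 < u x) ∧
  (∀ R : ℝ, ∃ C : ℝ, ∀ x : EuclideanSpace ℝ (Fin N), ‖x‖ ≤ R → u x ≤ C) ∧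
  Integrable (fun y : EuclideanSpace ℝ (Fin N) =>
    |u y| / (1 + ‖y‖ ^ ((N : ℝ) + 2 * s))) ∧
  (∀ x : EuclideanSpace ℝ (Fin N), x ≠ 0 → C11Near N u x) ∧
  (∀ x : EuclideanSpace ℝ (Fin N), x ≠ 0 →
    ∃ L : ℝ, IsFracLapAt N s u x L ∧ L = ‖x‖ ^ α * u x ^ p) ∧
  (∀ x : EuclideanSpace ℝ (Fin N),
    Integrable (fun y : EuclideanSpace ℝ (Fin N) =>
      ‖y‖ ^ α * u y ^ p / ‖x - y‖ ^ ((N : ℝ) - 2 * s)) ∧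
    u x = ∫ y : EuclideanSpace ℝ (Fin N),
      ‖y‖ ^ α * u y ^ p / ‖x - y‖ ^ ((N : ℝ) - 2 * s))

private lemma rpow_min_le {lo x hi : ℝ} (h0 : 0 < lo) (h1 : lo ≤ x) (h2 : x ≤ hi) (β : ℝ) :
    min (lo ^ β) (hi ^ β) ≤ x ^ β := by
  rcases le_or_gt 0 β with hβ | hβ
  · exact le_trans (min_le_left _ _) (Real.rpow_le_rpow h0.le h1 hβ)
  · exact le_trans (min_le_right _ _) (Real.rpow_le_rpow_of_nonpos (h0.trans_le h1) h2 hβ.le)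

private lemma rpow_le_max {lo x hi : ℝ} (h0 : 0 < lo) (h1 : lo ≤ x) (h2 : x ≤ hi) (β : ℝ) :
    x ^ β ≤ max (lo ^ β) (hi ^ β) := by
  rcases le_or_gt 0 β with hβ | hβ
  · exact le_trans (Real.rpow_le_rpow (h0.trans_le h1).le h2 hβ) (le_max_right _ _)
  · exact le_trans (Real.rpow_le_rpow_of_nonpos h0 h1 hβ.le) (le_max_left _ _)

private lemma ball_norm_bounds {N : ℕ} {e : EuclideanSpace ℝ (Fin N)} (he : ‖e‖ = 1)
    {T : ℝ} (hT : 0 < T) {y : EuclideanSpace ℝ (Fin N)}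
    (hy : y ∈ Metric.ball ((3 * T / 4) • e) (T / 8)) :
    T / 2 ≤ ‖y‖ ∧ ‖y‖ ≤ 7 * T / 8 := by
  have hz : ‖(3 * T / 4) • e‖ = 3 * T / 4 := by
    rw [norm_smul, he, mul_one, Real.norm_eq_abs, abs_of_pos (by linarith)]
  have hdlt : ‖y - (3 * T / 4) • e‖ < T / 8 := by
    rw [← dist_eq_norm]; exact Metric.mem_ball.mp hy
  have h1 := abs_norm_sub_norm_le y ((3 * T / 4) • e)
  rw [hz] at h1
  have h2 := abs_le.mp h1
  exact ⟨by linarith [h2.1], by linarith [h2.2]⟩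

private lemma bootstrap_step (N : ℕ) (hN : 0 < N) (s α p : ℝ)
    (hNs : 2 * s < (N : ℝ)) (hp : 0 < p) (u : EuclideanSpace ℝ (Fin N) → ℝ)
    (hupos : ∀ x, 0 < u x) (hcont : Continuous u)
    (hint : ∀ x : EuclideanSpace ℝ (Fin N),
      Integrable (fun y : EuclideanSpace ℝ (Fin N) =>
        ‖y‖ ^ α * u y ^ p / ‖x - y‖ ^ ((N : ℝ) - 2 * s)) ∧
      u x = ∫ y : EuclideanSpace ℝ (Fin N),
        ‖y‖ ^ α * u y ^ p / ‖x - y‖ ^ ((N : ℝ) - 2 * s))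
    {a c : ℝ} (hc : 0 < c)
    (hA : ∀ y : EuclideanSpace ℝ (Fin N), 1 ≤ ‖y‖ → c * ‖y‖ ^ (-a) ≤ u y) :
    ∃ c' > 0, ∀ y : EuclideanSpace ℝ (Fin N), 1 ≤ ‖y‖ →
      c' * ‖y‖ ^ (-(p * a - α - 2 * s)) ≤ u y := by
  classical
  set ν : ℝ := (N : ℝ) - 2 * s with hνdef
  have hν0 : 0 < ν := by rw [hνdef]; linarith
  set e : EuclideanSpace ℝ (Fin N) := EuclideanSpace.single (⟨0, hN⟩ : Fin N) (1 : ℝ) with hedef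
  have he : ‖e‖ = 1 := by simp [hedef]
  haveI : Nontrivial (EuclideanSpace ℝ (Fin N)) :=
    nontrivial_of_ne e 0 (fun h => by rw [h, norm_zero] at he; norm_num at he)
  set V : ℝ := (volume (Metric.ball (0 : EuclideanSpace ℝ (Fin N)) 1)).toReal with hVdef
  have hV : 0 < V :=
    ENNReal.toReal_pos (Metric.measure_ball_pos volume 0 one_pos).ne' measure_ball_lt_top.ne
  set q : ℝ → ℝ := fun β => min ((1 / 2 : ℝ) ^ β) 1 with hqdef
  have hqpos : ∀ β, 0 < q β := fun β => lt_min (Real.rpow_pos_of_pos (by norm_num) β) one_pos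
  have hq : ∀ T x β : ℝ, 0 < T → T / 2 ≤ x → x ≤ T → T ^ β * q β ≤ x ^ β := by
    intro T x β hT h1 h2
    have hx : 0 < x := by linarith
    have h3 : (1 / 2 : ℝ) ≤ x / T := by rw [le_div_iff₀ hT]; linarith
    have h4 : x / T ≤ 1 := by rw [div_le_one hT]; exact h2
    have h5 : q β ≤ (x / T) ^ β := by
      have := rpow_min_le (by norm_num : (0 : ℝ) < 1 / 2) h3 h4 β
      rwa [Real.one_rpow] at this
    calc T ^ β * q β ≤ T ^ β * (x / T) ^ β :=
          mul_le_mul_of_nonneg_left h5 (Real.rpow_nonneg hT.le β)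
      _ = x ^ β := by
          rw [← Real.mul_rpow hT.le (by positivity)]
          congr 1
          field_simp
  set a' : ℝ := p * a - α - 2 * s with ha'def
  set K : ℝ := q α * (c ^ p * q (-a) ^ p) * V / (2 ^ ν * 8 ^ N) with hKdef
  have hK : 0 < K := by
    apply div_pos
    · exact mul_pos (mul_pos (hqpos α)
        (mul_pos (Real.rpow_pos_of_pos hc p) (Real.rpow_pos_of_pos (hqpos (-a)) p))) hV
    · exact mul_pos (Real.rpow_pos_of_pos two_pos ν) (pow_pos (by norm_num) N)
  have main : ∀ x : EuclideanSpace ℝ (Fin N), 2 ≤ ‖x‖ → K * ‖x‖ ^ (-a') ≤ u x := by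
    intro x hx
    set T : ℝ := ‖x‖ with hTdef
    have hT0 : (0 : ℝ) < T := by linarith
    set z : EuclideanSpace ℝ (Fin N) := (3 * T / 4) • e with hzdef
    have hglow : ∀ y ∈ Metric.ball z (T / 8),
        T ^ α * q α * (c ^ p * (T ^ (-a) * q (-a)) ^ p) / (2 ^ ν * T ^ ν) ≤
          ‖y‖ ^ α * u y ^ p / ‖x - y‖ ^ ν := by
      intro y hy
      obtain ⟨hy1, hy2⟩ := ball_norm_bounds he hT0 hy
      have hy2' : ‖y‖ ≤ T := by linarith
      have hy0 : (0 : ℝ) < ‖y‖ := by linarith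
      have hy1' : (1 : ℝ) ≤ ‖y‖ := by linarith
      have hαb : T ^ α * q α ≤ ‖y‖ ^ α := hq T ‖y‖ α hT0 hy1 hy2'
      have hab : T ^ (-a) * q (-a) ≤ ‖y‖ ^ (-a) := hq T ‖y‖ (-a) hT0 hy1 hy2'
      have hTq0 : (0 : ℝ) < T ^ (-a) * q (-a) :=
        mul_pos (Real.rpow_pos_of_pos hT0 _) (hqpos _)
      have hub : c * (T ^ (-a) * q (-a)) ≤ u y :=
        le_trans (mul_le_mul_of_nonneg_left hab hc.le) (hA y hy1')
      have hup : (c * (T ^ (-a) * q (-a))) ^ p ≤ u y ^ p :=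
        Real.rpow_le_rpow (le_of_lt (mul_pos hc hTq0)) hub hp.le
      have hupc : (c * (T ^ (-a) * q (-a))) ^ p = c ^ p * (T ^ (-a) * q (-a)) ^ p :=
        Real.mul_rpow hc.le hTq0.le
      have hden1 : ‖x - y‖ ≤ 2 * T := by
        calc ‖x - y‖ ≤ ‖x‖ + ‖y‖ := norm_sub_le x y
          _ ≤ 2 * T := by rw [← hTdef]; linarith
      have hden0 : (0 : ℝ) < ‖x - y‖ := by
        have h1 := abs_norm_sub_norm_le x y
        have h2 := (abs_le.mp h1).2
        rw [← hTdef] at h2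
        linarith
      have hdenb : ‖x - y‖ ^ ν ≤ (2 * T) ^ ν :=
        Real.rpow_le_rpow (norm_nonneg _) hden1 hν0.le
      have hdenp : (0 : ℝ) < ‖x - y‖ ^ ν := Real.rpow_pos_of_pos hden0 ν
      have h2T : (2 * T) ^ ν = 2 ^ ν * T ^ ν :=
        Real.mul_rpow (by norm_num) hT0.le
      rw [← h2T]
      have hnum : T ^ α * q α * (c ^ p * (T ^ (-a) * q (-a)) ^ p) ≤ ‖y‖ ^ α * u y ^ p := by
        calc T ^ α * q α * (c ^ p * (T ^ (-a) * q (-a)) ^ p)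
            = (T ^ α * q α) * (c * (T ^ (-a) * q (-a))) ^ p := by rw [hupc]
          _ ≤ ‖y‖ ^ α * u y ^ p :=
              mul_le_mul hαb hup (Real.rpow_nonneg (le_of_lt (mul_pos hc hTq0)) p)
                (Real.rpow_nonneg (norm_nonneg _) α)
      exact div_le_div₀ (mul_nonneg (Real.rpow_nonneg (norm_nonneg _) _)
        (Real.rpow_nonneg (hupos y).le _)) hnum hdenp hdenb
    have hμS : (volume (Metric.ball z (T / 8))).toReal = (T / 8) ^ N * V := by
      rw [Measure.addHaar_ball volume z (by positivity : (0 : ℝ) ≤ T / 8),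
        finrank_euclideanSpace_fin, ENNReal.toReal_mul,
        ENNReal.toReal_ofReal (by positivity)]
    have hgnn : ∀ y : EuclideanSpace ℝ (Fin N),
        0 ≤ ‖y‖ ^ α * u y ^ p / ‖x - y‖ ^ ν := fun y =>
      div_nonneg (mul_nonneg (Real.rpow_nonneg (norm_nonneg _) _)
        (Real.rpow_nonneg (hupos y).le _)) (Real.rpow_nonneg (norm_nonneg _) _)
    have hgi : Integrable (fun y : EuclideanSpace ℝ (Fin N) =>
        ‖y‖ ^ α * u y ^ p / ‖x - y‖ ^ ν) := (hint x).1
    have hlow := setIntegral_ge_of_const_le (μ := volume) measurableSet_ball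
      measure_ball_lt_top.ne hglow hgi.integrableOn
    have hup2 : (∫ y in Metric.ball z (T / 8), ‖y‖ ^ α * u y ^ p / ‖x - y‖ ^ ν) ≤
        ∫ y, ‖y‖ ^ α * u y ^ p / ‖x - y‖ ^ ν :=
      setIntegral_le_integral hgi (Filter.Eventually.of_forall hgnn)
    have hcomb : T ^ α * q α * (c ^ p * (T ^ (-a) * q (-a)) ^ p) / (2 ^ ν * T ^ ν) *
        ((T / 8) ^ N * V) ≤ u x := by
      rw [(hint x).2, ← hμS]
      rw [smul_eq_mul, mul_comm] at hlow
      exact le_trans hlow hup2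
    have hTap : (T ^ (-a) * q (-a)) ^ p = T ^ (-a * p) * q (-a) ^ p := by
      rw [Real.mul_rpow (Real.rpow_nonneg hT0.le _) (hqpos (-a)).le,
        ← Real.rpow_mul hT0.le]
    have hTN : (T / 8) ^ N = T ^ (N : ℝ) / 8 ^ N := by
      rw [div_pow, Real.rpow_natCast]
    have hcollect : T ^ α * T ^ (-a * p) * T ^ (N : ℝ) / T ^ ν = T ^ (-a') := by
      rw [← Real.rpow_add hT0, ← Real.rpow_add hT0, ← Real.rpow_sub hT0]
      congr 1
      rw [hνdef, ha'def]; ring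
    have halg : T ^ α * q α * (c ^ p * (T ^ (-a) * q (-a)) ^ p) / (2 ^ ν * T ^ ν) *
        ((T / 8) ^ N * V) = K * T ^ (-a') := by
      rw [hTap, hTN, hKdef, ← hcollect]; ring
    rw [← halg]
    exact hcomb
  obtain ⟨x₀, hx₀mem, hx₀min⟩ :=
    (isCompact_closedBall (0 : EuclideanSpace ℝ (Fin N)) 2).exists_isMinOn
      ⟨0, Metric.mem_closedBall_self (by norm_num)⟩ hcont.continuousOn
  have hm0 : 0 < u x₀ := hupos x₀
  set M : ℝ := max ((1 : ℝ) ^ (-a')) ((2 : ℝ) ^ (-a')) with hM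
  have hM0 : 0 < M := lt_max_of_lt_left (Real.rpow_pos_of_pos one_pos _)
  refine ⟨min K (u x₀ / M), lt_min hK (div_pos hm0 hM0), ?_⟩
  intro y hy
  rcases le_or_gt ‖y‖ 2 with h2 | h2
  · have hyM : ‖y‖ ^ (-a') ≤ M := rpow_le_max one_pos hy h2 (-a')
    have hmem : y ∈ Metric.closedBall (0 : EuclideanSpace ℝ (Fin N)) 2 :=
      mem_closedBall_zero_iff.mpr h2
    have huy : u x₀ ≤ u y := isMinOn_iff.mp hx₀min y hmem
    calc min K (u x₀ / M) * ‖y‖ ^ (-a')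
        ≤ u x₀ / M * M :=
          mul_le_mul (min_le_right _ _) hyM (Real.rpow_nonneg (norm_nonneg _) _)
            (le_of_lt (div_pos hm0 hM0))
      _ = u x₀ := div_mul_cancel₀ _ hM0.ne'
      _ ≤ u y := huy
  · calc min K (u x₀ / M) * ‖y‖ ^ (-a')
        ≤ K * ‖y‖ ^ (-a') :=
          mul_le_mul_of_nonneg_right (min_le_left _ _) (Real.rpow_nonneg (norm_nonneg _) _)
      _ ≤ u y := main y h2.le

private lemma no_integrable (N : ℕ) (hN : 0 < N) (s α p : ℝ)
    (hNs : 2 * s < (N : ℝ)) (hp : 0 < p) (u : EuclideanSpace ℝ (Fin N) → ℝ)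
    (hupos : ∀ x, 0 < u x) {a c : ℝ} (hc : 0 < c) (hpa : p * a ≤ α + 2 * s)
    (hA : ∀ y : EuclideanSpace ℝ (Fin N), 1 ≤ ‖y‖ → c * ‖y‖ ^ (-a) ≤ u y)
    (hint : Integrable (fun y : EuclideanSpace ℝ (Fin N) =>
      ‖y‖ ^ α * u y ^ p / ‖(0 : EuclideanSpace ℝ (Fin N)) - y‖ ^ ((N : ℝ) - 2 * s))) :
    False := by
  classical
  set ν : ℝ := (N : ℝ) - 2 * s with hνdef
  have hν0 : 0 < ν := by rw [hνdef]; linarith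
  set e : EuclideanSpace ℝ (Fin N) := EuclideanSpace.single (⟨0, hN⟩ : Fin N) (1 : ℝ) with hedef
  have he : ‖e‖ = 1 := by simp [hedef]
  haveI : Nontrivial (EuclideanSpace ℝ (Fin N)) :=
    nontrivial_of_ne e 0 (fun h => by rw [h, norm_zero] at he; norm_num at he)
  set V : ℝ := (volume (Metric.ball (0 : EuclideanSpace ℝ (Fin N)) 1)).toReal with hVdef
  have hV : 0 < V :=
    ENNReal.toReal_pos (Metric.measure_ball_pos volume 0 one_pos).ne' measure_ball_lt_top.ne
  set T : ℕ → ℝ := fun k => 2 ^ (k + 1) with hTdef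
  have hT0 : ∀ k, (0 : ℝ) < T k := fun k => by positivity
  have hT2 : ∀ k, (2 : ℝ) ≤ T k := by
    intro k
    calc (2 : ℝ) = 2 ^ 1 := (pow_one 2).symm
      _ ≤ 2 ^ (k + 1) := pow_le_pow_right₀ (by norm_num) (by omega)
  set B : ℕ → Set (EuclideanSpace ℝ (Fin N)) :=
    fun k => Metric.ball ((3 * T k / 4) • e) (T k / 8) with hBdef
  have hmono : ∀ k l : ℕ, k < l → Disjoint (B k) (B l) := by
    intro k l hkl
    rw [Set.disjoint_left]
    intro y hyk hyl
    have h1 := (ball_norm_bounds he (hT0 k) hyk).2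
    have h2 := (ball_norm_bounds he (hT0 l) hyl).1
    have hTkl : 2 * T k ≤ T l := by
      rw [hTdef]
      simp only
      rw [← pow_succ']
      exact pow_le_pow_right₀ (by norm_num) (by omega)
    linarith [hT0 k]
  have hdisj : Pairwise (Function.onFun Disjoint B) := by
    intro k l hkl
    rcases hkl.lt_or_gt with h | h
    · exact hmono k l h
    · exact (hmono l k h).symm
  set δ : ℝ := c ^ p * V / 8 ^ N with hδdef
  have hδ0 : 0 < δ :=
    div_pos (mul_pos (Real.rpow_pos_of_pos hc p) hV) (pow_pos (by norm_num) N)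
  have hlow : ∀ k, δ ≤ ∫ y in B k,
      ‖y‖ ^ α * u y ^ p / ‖(0 : EuclideanSpace ℝ (Fin N)) - y‖ ^ ν := by
    intro k
    have hμ : (volume (B k)).toReal = (T k / 8) ^ N * V := by
      rw [hBdef]
      simp only
      rw [Measure.addHaar_ball volume _ (by positivity : (0 : ℝ) ≤ T k / 8),
        finrank_euclideanSpace_fin, ENNReal.toReal_mul,
        ENNReal.toReal_ofReal (by positivity)]
    have hptw : ∀ y ∈ B k, c ^ p * T k ^ (-(N : ℝ)) ≤
        ‖y‖ ^ α * u y ^ p / ‖(0 : EuclideanSpace ℝ (Fin N)) - y‖ ^ ν := by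
      intro y hy
      obtain ⟨hy1, hy2⟩ := ball_norm_bounds he (hT0 k) hy
      have hy2' : ‖y‖ ≤ T k := by linarith
      have hy0 : (0 : ℝ) < ‖y‖ := by linarith [hT0 k]
      have hy1' : (1 : ℝ) ≤ ‖y‖ := by linarith [hT2 k]
      have hnorm0 : ‖(0 : EuclideanSpace ℝ (Fin N)) - y‖ = ‖y‖ := by
        rw [zero_sub, norm_neg]
      have hub : c * ‖y‖ ^ (-a) ≤ u y := hA y hy1'
      have hup : (c * ‖y‖ ^ (-a)) ^ p ≤ u y ^ p :=
        Real.rpow_le_rpow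
          (le_of_lt (mul_pos hc (Real.rpow_pos_of_pos hy0 _))) hub hp.le
      have e1 : (c * ‖y‖ ^ (-a)) ^ p = c ^ p * ‖y‖ ^ (-a * p) := by
        rw [Real.mul_rpow hc.le (Real.rpow_nonneg hy0.le _), ← Real.rpow_mul hy0.le]
      have e2 : ‖y‖ ^ α * (c ^ p * ‖y‖ ^ (-a * p)) / ‖y‖ ^ ν =
          c ^ p * ‖y‖ ^ (α + -a * p - ν) := by
        rw [Real.rpow_sub hy0 (α + -a * p) ν, Real.rpow_add hy0 α (-a * p)]; ring
      have hβ : -(N : ℝ) ≤ α + -a * p - ν := by rw [hνdef]; nlinarith [hpa]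
      have h3 : T k ^ (-(N : ℝ)) ≤ ‖y‖ ^ (-(N : ℝ)) :=
        Real.rpow_le_rpow_of_nonpos hy0 hy2' (by simp [Nat.cast_nonneg])
      have h4 : ‖y‖ ^ (-(N : ℝ)) ≤ ‖y‖ ^ (α + -a * p - ν) :=
        Real.rpow_le_rpow_of_exponent_le hy1' hβ
      calc c ^ p * T k ^ (-(N : ℝ))
          ≤ c ^ p * ‖y‖ ^ (α + -a * p - ν) :=
            mul_le_mul_of_nonneg_left (le_trans h3 h4)
              (Real.rpow_nonneg hc.le p)
        _ = ‖y‖ ^ α * (c * ‖y‖ ^ (-a)) ^ p / ‖y‖ ^ ν := by rw [e1, e2]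
        _ ≤ ‖y‖ ^ α * u y ^ p / ‖y‖ ^ ν := by
            apply div_le_div₀ (mul_nonneg (Real.rpow_nonneg (norm_nonneg _) _)
              (Real.rpow_nonneg (hupos y).le _)) ?_ (Real.rpow_pos_of_pos hy0 ν) le_rfl
            exact mul_le_mul_of_nonneg_left hup (Real.rpow_nonneg (norm_nonneg _) _)
        _ = ‖y‖ ^ α * u y ^ p / ‖(0 : EuclideanSpace ℝ (Fin N)) - y‖ ^ ν := by
            rw [hnorm0]
    have hconst := setIntegral_ge_of_const_le (μ := volume) measurableSet_ball
      measure_ball_lt_top.ne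
      (by rw [hBdef] at hptw; exact hptw) (hint.integrableOn)
    have hδeq : c ^ p * T k ^ (-(N : ℝ)) * ((T k / 8) ^ N * V) = δ := by
      have h8 : (T k / 8) ^ N = T k ^ (N : ℕ) / 8 ^ N := div_pow _ _ _
      have hTn : T k ^ (-(N : ℝ)) * T k ^ (N : ℕ) = 1 := by
        rw [← Real.rpow_natCast (T k) N, ← Real.rpow_add (hT0 k)]
        simp
      rw [h8]
      calc c ^ p * T k ^ (-(N : ℝ)) * (T k ^ (N : ℕ) / 8 ^ N * V)
          = c ^ p * V / 8 ^ N * (T k ^ (-(N : ℝ)) * T k ^ (N : ℕ)) := by ring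
        _ = δ := by rw [hTn, mul_one, hδdef]
    calc δ = c ^ p * T k ^ (-(N : ℝ)) * ((T k / 8) ^ N * V) := hδeq.symm
      _ = c ^ p * T k ^ (-(N : ℝ)) * (volume (B k)).toReal := by rw [hμ]
      _ ≤ _ := by simp only [hBdef] at hconst ⊢; rw [smul_eq_mul, mul_comm] at hconst; exact hconst
  have hsum := hasSum_integral_iUnion (μ := volume)
    (fun k => (measurableSet_ball : MeasurableSet (B k))) hdisj hint.integrableOn
  have htend := hsum.summable.tendsto_atTop_zero
  obtain ⟨k, hk⟩ := (htend.eventually_lt_const hδ0).exists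
  exact absurd (hlow k) (not_le.mpr hk)

private lemma init_bound (N : ℕ) (hN : 0 < N) (s : ℝ)
    (u : EuclideanSpace ℝ (Fin N) → ℝ) (hupos : ∀ x, 0 < u x) (hcont : Continuous u)
    (H : ∀ lam : ℝ, 0 < lam →
        ∀ x : EuclideanSpace ℝ (Fin N), 0 < ‖x‖ → ‖x‖ < lam →
          u x ≤ kelvinTransform N s lam u x) :
    ∃ c > 0, ∀ y : EuclideanSpace ℝ (Fin N), 1 ≤ ‖y‖ →
      c * ‖y‖ ^ (-(((N : ℝ) - 2 * s) / 2)) ≤ u y := by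
  classical
  set e : EuclideanSpace ℝ (Fin N) := EuclideanSpace.single (⟨0, hN⟩ : Fin N) (1 : ℝ) with hedef
  have he : ‖e‖ = 1 := by simp [hedef]
  have hsph : (Metric.sphere (0 : EuclideanSpace ℝ (Fin N)) 1).Nonempty :=
    ⟨e, by rwa [mem_sphere_zero_iff_norm]⟩
  obtain ⟨x₀, hx₀mem, hx₀min⟩ :=
    (isCompact_sphere (0 : EuclideanSpace ℝ (Fin N)) 1).exists_isMinOn hsph
      hcont.continuousOn
  refine ⟨u x₀, hupos x₀, ?_⟩
  intro y hy
  rcases eq_or_lt_of_le hy with heq | hlt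
  · rw [← heq, Real.one_rpow, mul_one]
    exact isMinOn_iff.mp hx₀min y (by rw [mem_sphere_zero_iff_norm]; exact heq.symm)
  · set t : ℝ := ‖y‖ with htdef
    have ht0 : (0 : ℝ) < t := by linarith
    set x : EuclideanSpace ℝ (Fin N) := t⁻¹ • y with hxdef
    have hxnorm : ‖x‖ = 1 := by
      rw [hxdef, norm_smul, Real.norm_eq_abs, abs_of_pos (inv_pos.mpr ht0), ← htdef]
      field_simp
    have hlam : (1 : ℝ) < Real.sqrt t := by
      rw [show (1 : ℝ) = Real.sqrt 1 from (Real.sqrt_one).symm]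
      exact Real.sqrt_lt_sqrt (by norm_num) hlt
    have hH := H (Real.sqrt t) (by linarith) x (by rw [hxnorm]; norm_num)
      (by rw [hxnorm]; exact hlam)
    rw [kelvinTransform, hxnorm] at hH
    have hsq : Real.sqrt t ^ 2 = t := Real.sq_sqrt ht0.le
    rw [one_pow, div_one, div_one, hsq, hxdef, smul_smul, mul_inv_cancel₀ ht0.ne',
      one_smul] at hH
    have hsrt : Real.sqrt t ^ ((N : ℝ) - 2 * s) = t ^ (((N : ℝ) - 2 * s) / 2) := by
      rw [Real.sqrt_eq_rpow, ← Real.rpow_mul ht0.le]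
      congr 1
      ring
    rw [hsrt] at hH
    have h1 : u x₀ ≤ u x :=
      isMinOn_iff.mp hx₀min x (by rw [mem_sphere_zero_iff_norm]; exact hxnorm)
    have h2 : u x₀ ≤ t ^ (((N : ℝ) - 2 * s) / 2) * u y := le_trans h1 hH
    have hpow : (0 : ℝ) < t ^ (((N : ℝ) - 2 * s) / 2) := Real.rpow_pos_of_pos ht0 _
    rw [Real.rpow_neg ht0.le, ← div_eq_mul_inv, div_le_iff₀ hpow]
    rwa [mul_comm] at h2

/-- **The moving-spheres supremum cannot be infinite** (Proposition 3.4): it is not the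
case that `u_λ ≥ u` in `B_λ \ {0}` for every `λ > 0`. -/
theorem moving_spheres_not_all_lambda
    (N : ℕ) (hN : 0 < N) (s α p : ℝ) (hs0 : 0 < s) (hs1 : s < 1)
    (hNs : 2 * s < (N : ℝ)) (hα : -2 * s < α) (hp1 : 1 < p)
    (hp2 : p < ((N : ℝ) + 2 * α + 2 * s) / ((N : ℝ) - 2 * s))
    (u : EuclideanSpace ℝ (Fin N) → ℝ)
    (hu : AdmissiblePositiveSolution N s α p u) :
    ¬ (∀ lam : ℝ, 0 < lam →
        ∀ x : EuclideanSpace ℝ (Fin N), 0 < ‖x‖ → ‖x‖ < lam →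
          u x ≤ kelvinTransform N s lam u x) := by
  intro H
  obtain ⟨hcont, hupos, -, -, -, -, hint⟩ := hu
  have hp0 : (0 : ℝ) < p := by linarith
  have hN2s : (0 : ℝ) < (N : ℝ) - 2 * s := by linarith
  have hσ : (0 : ℝ) < α + 2 * s := by linarith
  obtain ⟨c₀, hc₀, hb₀⟩ := init_bound N hN s u hupos hcont H
  set astar : ℝ := (α + 2 * s) / (p - 1) with hastar
  have hp1' : (0 : ℝ) < p - 1 := by linarith
  have hastareq : astar * (p - 1) = α + 2 * s := div_mul_cancel₀ _ hp1'.ne'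
  set d : ℝ := astar - ((N : ℝ) - 2 * s) / 2 with hd
  have hd0 : 0 < d := by
    rw [hd, hastar, sub_pos, lt_div_iff₀ hp1']
    have h1 : p * ((N : ℝ) - 2 * s) < (N : ℝ) + 2 * α + 2 * s :=
      (lt_div_iff₀ hN2s).mp hp2
    nlinarith
  have hiter : ∀ k : ℕ, ∃ c > 0, ∀ y : EuclideanSpace ℝ (Fin N), 1 ≤ ‖y‖ →
      c * ‖y‖ ^ (-(astar - p ^ k * d)) ≤ u y := by
    intro k
    induction k with
    | zero =>
      refine ⟨c₀, hc₀, ?_⟩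
      have hexp : astar - p ^ 0 * d = ((N : ℝ) - 2 * s) / 2 := by
        rw [pow_zero, one_mul, hd]; ring
      rw [hexp]
      exact hb₀
    | succ k ih =>
      obtain ⟨ck, hck, hbk⟩ := ih
      obtain ⟨c', hc', hb'⟩ :=
        bootstrap_step N hN s α p hNs hp0 u hupos hcont hint hck hbk
      refine ⟨c', hc', ?_⟩
      have hexp : p * (astar - p ^ k * d) - α - 2 * s = astar - p ^ (k + 1) * d := by
        linear_combination hastareq
      rw [← hexp]
      exact hb'
  obtain ⟨k, hk⟩ := pow_unbounded_of_one_lt (astar / d) hp1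
  obtain ⟨c, hc, hb⟩ := hiter k
  have ha0 : astar - p ^ k * d ≤ 0 := by
    have h1 : astar < p ^ k * d := by
      have := (div_lt_iff₀ hd0).mp hk
      linarith
    linarith
  have hpa : p * (astar - p ^ k * d) ≤ α + 2 * s := by
    have h1 : 0 ≤ p * -(astar - p ^ k * d) :=
      mul_nonneg hp0.le (neg_nonneg.mpr ha0)
    nlinarith
  exact no_integrable N hN s α p hNs hp0 u hupos hc hpa hb (hint 0).1
end
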